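/- Let a, b satisfy either a, b \in (-1,\infty) with ab > 0, or a, b \in \mathbb{C} \setminus \{0\} with b = \overline{a}; let c be a positive real number with c > \mathrm{Re}(a+b) + 1, and let \alpha \in \mathbb{C} with |\alpha| < 1. If |\alpha| \cdot \frac{\Gamma(c)\Gamma(c-a-b-1)}{\Gamma(c-a)\Gamma(c-b)} (ab + c - a - b - 1) \leq 1 (this quantity being a positive real number), then the Taylor coefficients b_n = \frac{\alpha}{2} \frac{(a)_{n-1}(b)_{n-1}}{(c)_{n-1} (n-1)!} of g_1(z) = (\alpha/2)\, z\, F(a,b;c;z) satisfy \sum_{n=1}^{\infty} n |b_n| \leq 1/2; consequently f_1(z) = z + \overline{(\alpha/2)\, z\, F(a,b;c;z)} is uniformly starlike in \mathbb{D}. -/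

import Mathlib

open Complex Metric ComplexConjugate

noncomputable section

/-- The Pochhammer symbol `(x)ₙ = x(x+1)⋯(x+n-1)` for `x : ℂ`. -/
def poch (x : ℂ) (n : ℕ) : ℂ := (ascPochhammer ℂ n).eval x

/-- The Gaussian hypergeometric function `F(a,b;c;z) = ∑ (a)ₙ(b)ₙ/((c)ₙ n!) zⁿ`. -/
def hypF (a b c z : ℂ) : ℂ :=
  ∑' n : ℕ, poch a n * poch b n / (poch c n * (Nat.factorial n : ℂ)) * z ^ n

/-- The analytic condition (due to Kanas–Ponnusamy–Sairam) characterizing uniform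
starlikeness used in the paper, taken here as the formal definition of
"`h + conj g` is uniformly starlike in `𝔻`". -/
def UniformlyStarlikeOnDisk (h g : ℂ → ℂ) : Prop :=
  (h 0 + conj (g 0) = 0) ∧
  (∀ z ∈ ball (0:ℂ) 1, ‖deriv g z‖ < ‖deriv h z‖) ∧
  (∀ z ∈ ball (0:ℂ) 1, ∀ ζ ∈ ball (0:ℂ) 1, z ≠ ζ →
    0 ≤ (((h z + conj (g z)) - (h ζ + conj (g ζ)))
        / ((z - ζ) * deriv h z - conj (z - ζ) * conj (deriv g z))).re) ∧
  (∀ z ∈ ball (0:ℂ) 1, z ≠ 0 →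
    0 < ((h z + conj (g z))
        / (z * deriv h z - conj z * conj (deriv g z))).re)

/-- The Taylor coefficient `b_{n+1} = (α/2) (a)ₙ(b)ₙ/((c)ₙ n!)` of
`g₁(z) = (α/2) z F(a,b;c;z)`. -/
def bc1 (a b c α : ℂ) (n : ℕ) : ℂ :=
  α / 2 * (poch a n * poch b n) / (poch c n * (Nat.factorial n : ℂ))

open Topology Filter


def pr (x : ℝ) (n : ℕ) : ℝ := (ascPochhammer ℝ n).eval x

lemma poch_zero (x : ℂ) : poch x 0 = 1 := by simp [poch]
lemma poch_succ (x : ℂ) (n : ℕ) : poch x (n+1) = poch x n * (x + n) :=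
  ascPochhammer_succ_eval n x
lemma pr_zero (x : ℝ) : pr x 0 = 1 := by simp [pr]
lemma pr_succ (x : ℝ) (n : ℕ) : pr x (n+1) = pr x n * (x + n) :=
  ascPochhammer_succ_eval n x

lemma pr_pos {x : ℝ} (hx : 0 < x) (n : ℕ) : 0 < pr x n := by
  induction n with
  | zero => simp [pr_zero]
  | succ n ih => rw [pr_succ]; positivity

lemma poch_ofReal (x : ℝ) (n : ℕ) : poch (x : ℂ) n = ((pr x n : ℝ) : ℂ) := by
  induction n with
  | zero => simp [poch_zero, pr_zero]
  | succ n ih => rw [poch_succ, pr_succ, ih]; push_cast; ring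

lemma pr_mono {x y : ℝ} (hx : 0 < x) (hxy : x ≤ y) (n : ℕ) : pr x n ≤ pr y n := by
  induction n with
  | zero => simp [pr_zero]
  | succ n ih =>
      rw [pr_succ, pr_succ]
      have h1 : (0:ℝ) < pr x n := pr_pos hx n
      have h2 : (0:ℝ) < x + n := by positivity
      nlinarith [pr_pos (lt_of_lt_of_le hx hxy) n]

lemma pr_ratio {x y : ℝ} (hx : 0 < x) (hxy : x ≤ y) (n : ℕ) (hn : 1 ≤ n) :
    y * pr x n ≤ x * pr y n := by
  induction n with
  | zero => omega
  | succ n ih =>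
      rcases Nat.eq_or_lt_of_le hn with h | h
      · simp only [← h, pr_succ, pr_zero]; push_cast; nlinarith
      · have hn' : 1 ≤ n := by omega
        have h5 := ih hn'
        rw [pr_succ, pr_succ]
        have h2 : (0:ℝ) < x + n := by positivity
        have h3 : x + n ≤ y + n := by linarith
        have h4 : (0:ℝ) ≤ x * pr y n :=
          mul_nonneg hx.le (pr_pos (lt_of_lt_of_le hx hxy) n).le
        nlinarith [mul_le_mul_of_nonneg_right h5 h2.le, mul_le_mul_of_nonneg_left h3 h4]

lemma pr_shift (x : ℝ) (n : ℕ) : pr x n * (x + n) = x * pr (x+1) n := by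
  induction n with
  | zero => simp [pr_zero]
  | succ n ih =>
      rw [pr_succ, pr_succ]
      push_cast
      linear_combination (x + (n:ℝ) + 1) * ih


lemma poch_eq_prod (x : ℂ) (n : ℕ) : poch x n = ∏ k ∈ Finset.range n, (x + k) := by
  induction n with
  | zero => simp [poch_zero]
  | succ n ih => rw [poch_succ, Finset.prod_range_succ, ih]

-- key positivity lemma
lemma re_div_pos {u v : ℂ} (hu : ‖u‖ ≤ 1/2) (hv : ‖v‖ ≤ 1/2) :
    0 < ((1+u)/(1-v)).re := by
  rw [show (1:ℝ)/2 = ((1:ℝ)/2 : ℝ) from rfl] at hu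
  have hu' : ‖u‖ ≤ 1/2 := hu
  have hv' : ‖v‖ ≤ 1/2 := hv
  have hnu : Complex.normSq u ≤ 1/4 := by
    rw [Complex.normSq_eq_norm_sq]; nlinarith [norm_nonneg u]
  have hnv : Complex.normSq v ≤ 1/4 := by
    rw [Complex.normSq_eq_norm_sq]; nlinarith [norm_nonneg v]
  have hx := Complex.normSq_apply u
  have hy := Complex.normSq_apply v
  have hvne : (1:ℂ) - v ≠ 0 := by
    intro h
    have : v = 1 := by linear_combination -h
    rw [this] at hv; norm_num at hv
  have hns : 0 < Complex.normSq (1 - v) := Complex.normSq_pos.2 hvne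
  rw [Complex.div_re]
  have h1 : (1+u).re = 1 + u.re := by simp
  have h2 : (1+u).im = u.im := by simp
  have h3 : (1-v).re = 1 - v.re := by simp
  have h4 : (1-v).im = -v.im := by simp
  rw [h1, h2, h3, h4]
  rw [← add_div]
  apply div_pos _ hns
  nlinarith [sq_nonneg (u.im - v.im), sq_nonneg (u.re - v.re + 1)]

lemma norm_pow_sub_pow {z ζ : ℂ} (hz : ‖z‖ ≤ 1) (hζ : ‖ζ‖ ≤ 1) (m : ℕ) :
    ‖z ^ m - ζ ^ m‖ ≤ m * ‖z - ζ‖ := by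
  rw [← geom_sum₂_mul z ζ m, norm_mul]
  have : ‖∑ i ∈ Finset.range m, z ^ i * ζ ^ (m - 1 - i)‖ ≤ m := by
    calc ‖∑ i ∈ Finset.range m, z ^ i * ζ ^ (m - 1 - i)‖
        ≤ ∑ i ∈ Finset.range m, ‖z ^ i * ζ ^ (m - 1 - i)‖ := norm_sum_le _ _
      _ ≤ ∑ i ∈ Finset.range m, 1 := by
          apply Finset.sum_le_sum
          intro i _
          rw [norm_mul, norm_pow, norm_pow]
          exact mul_le_one₀ (pow_le_one₀ (norm_nonneg _) hz) (by positivity)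
            (pow_le_one₀ (norm_nonneg _) hζ)
      _ = m := by simp
  have h0 : (0:ℝ) ≤ ‖z - ζ‖ := norm_nonneg _
  nlinarith [norm_nonneg (∑ i ∈ Finset.range m, z ^ i * ζ ^ (m - 1 - i))]

lemma starlike_of_coeff (β : ℕ → ℂ)
    (hs : Summable (fun n : ℕ => ((n:ℝ)+1) * ‖β n‖))
    (hb : (∑' n : ℕ, ((n:ℝ)+1) * ‖β n‖) ≤ 1/2)
    (g : ℂ → ℂ) (hg : ∀ z, g z = ∑' n : ℕ, β n * z^(n+1)) :
    UniformlyStarlikeOnDisk (fun z => z) g := by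
  have hβu : ∀ n, ‖β n‖ ≤ ((n:ℝ)+1) * ‖β n‖ := by
    intro n
    nlinarith [norm_nonneg (β n), Nat.cast_nonneg (α := ℝ) n]
  have hβs : Summable (fun n => ‖β n‖) :=
    Summable.of_nonneg_of_le (fun n => norm_nonneg _) hβu hs
  have hsummz : ∀ z : ℂ, ‖z‖ ≤ 1 → Summable (fun n => β n * z^(n+1)) := by
    intro z hz
    apply Summable.of_norm
    apply Summable.of_nonneg_of_le (fun n => norm_nonneg _) _ hβs
    intro n
    rw [norm_mul, norm_pow]
    nlinarith [norm_nonneg (β n), pow_le_one₀ (norm_nonneg z) hz (n := n+1),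
      pow_nonneg (norm_nonneg z) (n+1)]
  have hg0 : g 0 = 0 := by
    rw [hg 0]
    simp
  have hder : ∀ z ∈ ball (0:ℂ) 1,
      HasDerivAt g (∑' n : ℕ, β n * (((n:ℂ)+1) * z^n)) z := by
    intro z hz
    have := hasDerivAt_tsum_of_isPreconnected (u := fun n : ℕ => ((n:ℝ)+1) * ‖β n‖)
      (g := fun n y => β n * y^(n+1)) (g' := fun n y => β n * (((n:ℂ)+1) * y^n))
      hs isOpen_ball (convex_ball (0:ℂ) 1).isPreconnected
      (fun n y _ => by
        simpa using (hasDerivAt_pow (n+1) y).const_mul (β n))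
      (fun n y hy => by
        show ‖β n * (((n:ℂ)+1) * y^n)‖ ≤ ((n:ℝ)+1) * ‖β n‖
        rw [mem_ball, dist_zero_right] at hy
        rw [norm_mul, norm_mul, norm_pow]
        have h1 : ‖(n:ℂ)+1‖ = (n:ℝ)+1 := by
          rw [show ((n:ℂ)+1) = ((n+1:ℕ):ℂ) by push_cast; ring, Complex.norm_natCast]
          push_cast; ring
        rw [h1]
        have h2 : ‖y‖^n ≤ 1 := pow_le_one₀ (norm_nonneg _) hy.le
        have h3 := mul_le_mul_of_nonneg_left h2
          (show (0:ℝ) ≤ ‖β n‖*((n:ℝ)+1) by positivity)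
        nlinarith [h3])
      (mem_ball_self one_pos)
      (by simpa using summable_zero)
      hz
    have he : (fun z : ℂ => ∑' n : ℕ, β n * z^(n+1)) = g := funext fun z => (hg z).symm
    rwa [he] at this
  have hder_norm : ∀ z ∈ ball (0:ℂ) 1, ‖deriv g z‖ ≤ 1/2 := by
    intro z hz
    rw [(hder z hz).deriv]
    rw [mem_ball, dist_zero_right] at hz
    have hterm : ∀ n : ℕ, ‖β n * (((n:ℂ)+1) * z^n)‖ ≤ ((n:ℝ)+1) * ‖β n‖ := by
      intro n
      rw [norm_mul, norm_mul, norm_pow]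
      have h1 : ‖(n:ℂ)+1‖ = (n:ℝ)+1 := by
        rw [show ((n:ℂ)+1) = ((n+1:ℕ):ℂ) by push_cast; ring, Complex.norm_natCast]
        push_cast; ring
      rw [h1]
      have h2 : ‖z‖^n ≤ 1 := pow_le_one₀ (norm_nonneg _) hz.le
      have h3 := mul_le_mul_of_nonneg_left h2
        (show (0:ℝ) ≤ ‖β n‖*((n:ℝ)+1) by positivity)
      nlinarith [h3]
    have hns : Summable (fun n => ‖β n * (((n:ℂ)+1) * z^n)‖) :=
      Summable.of_nonneg_of_le (fun n => norm_nonneg _) hterm hs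
    calc ‖∑' n : ℕ, β n * (((n:ℂ)+1) * z^n)‖ ≤ ∑' n : ℕ, ‖β n * (((n:ℂ)+1) * z^n)‖ :=
          norm_tsum_le_tsum_norm hns
      _ ≤ ∑' n : ℕ, ((n:ℝ)+1) * ‖β n‖ := Summable.tsum_le_tsum hterm hns hs
      _ ≤ 1/2 := hb
  have hdiff : ∀ z ζ : ℂ, ‖z‖ ≤ 1 → ‖ζ‖ ≤ 1 → ‖g z - g ζ‖ ≤ 1/2 * ‖z - ζ‖ := by
    intro z ζ hz hζ
    rw [hg z, hg ζ, ← Summable.tsum_sub (hsummz z hz) (hsummz ζ hζ)]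
    have heq : ∀ n : ℕ, β n * z^(n+1) - β n * ζ^(n+1) = β n * (z^(n+1) - ζ^(n+1)) :=
      fun n => by ring
    simp only [heq]
    have hterm : ∀ n : ℕ, ‖β n * (z^(n+1) - ζ^(n+1))‖ ≤ (((n:ℝ)+1) * ‖β n‖) * ‖z - ζ‖ := by
      intro n
      rw [norm_mul]
      have h4 := norm_pow_sub_pow hz hζ (n+1)
      push_cast at h4
      have h3 := mul_le_mul_of_nonneg_left h4 (norm_nonneg (β n))
      nlinarith [h3]
    have hsum2 : Summable (fun n : ℕ => (((n:ℝ)+1) * ‖β n‖) * ‖z - ζ‖) := hs.mul_right ‖z - ζ‖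
    have hns : Summable (fun n : ℕ => ‖β n * (z^(n+1) - ζ^(n+1))‖) :=
      Summable.of_nonneg_of_le (fun n => norm_nonneg _) hterm hsum2
    calc ‖∑' n : ℕ, β n * (z^(n+1) - ζ^(n+1))‖
        ≤ ∑' n : ℕ, ‖β n * (z^(n+1) - ζ^(n+1))‖ :=
          norm_tsum_le_tsum_norm hns
      _ ≤ ∑' n : ℕ, (((n:ℝ)+1) * ‖β n‖) * ‖z - ζ‖ := Summable.tsum_le_tsum hterm hns hsum2
      _ = (∑' n : ℕ, ((n:ℝ)+1) * ‖β n‖) * ‖z - ζ‖ := tsum_mul_right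
      _ ≤ 1/2 * ‖z - ζ‖ := by
          apply mul_le_mul_of_nonneg_right hb (norm_nonneg _)
  have hkey : ∀ z ∈ ball (0:ℂ) 1, ∀ ζ ∈ ball (0:ℂ) 1, z ≠ ζ →
      0 < (((z - ζ) + (conj (g z) - conj (g ζ)))
        / ((z - ζ) - conj (z - ζ) * conj (deriv g z))).re := by
    intro z hz ζ hζ hne
    set w := z - ζ with hw_def
    have hw : w ≠ 0 := sub_ne_zero.2 hne
    set U := (conj (g z) - conj (g ζ)) / w with hU
    set V := conj w * conj (deriv g z) / w with hV
    have hnum : w + (conj (g z) - conj (g ζ)) = w * (1 + U) := by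
      rw [hU]; field_simp
    have hden : w - conj w * conj (deriv g z) = w * (1 - V) := by
      rw [hV]; field_simp
    rw [hnum, hden, mul_div_mul_left _ _ hw]
    apply re_div_pos
    · rw [hU, norm_div]
      rw [div_le_iff₀ (norm_pos_iff.2 hw)]
      rw [← map_sub]
      rw [show ‖(starRingEnd ℂ) (g z - g ζ)‖ = ‖g z - g ζ‖ from Complex.norm_conj _]
      rw [mem_ball, dist_zero_right] at hz hζ
      exact hdiff z ζ hz.le hζ.le
    · rw [hV, norm_div, norm_mul]
      rw [show ‖(starRingEnd ℂ) w‖ = ‖w‖ from Complex.norm_conj _]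
      rw [show ‖(starRingEnd ℂ) (deriv g z)‖ = ‖deriv g z‖ from Complex.norm_conj _]
      rw [mul_comm, mul_div_assoc, div_self (norm_ne_zero_iff.2 hw), mul_one]
      exact hder_norm z hz
  refine ⟨by simp [hg0], ?_, ?_, ?_⟩
  · intro z hz
    rw [deriv_id'']
    calc ‖deriv g z‖ ≤ 1/2 := hder_norm z hz
      _ < ‖(1:ℂ)‖ := by norm_num
  · intro z hz ζ hζ hne
    rw [deriv_id'', mul_one]
    have h := hkey z hz ζ hζ hne
    have he : z + conj (g z) - (ζ + conj (g ζ)) = (z - ζ) + (conj (g z) - conj (g ζ)) := by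
      ring
    rw [he]
    exact h.le
  · intro z hz hne
    rw [deriv_id'', mul_one]
    have h := hkey z hz 0 (mem_ball_self one_pos) hne
    simpa [hg0] using h

def uu (a b : ℂ) (n : ℕ) : ℝ := ‖poch a n * poch b n‖

def tt (a b : ℂ) (c : ℝ) (n : ℕ) : ℝ := uu a b n / (pr c n * n.factorial)

section main
variable {a b : ℂ} {p r : ℝ}

lemma quad (hp : a + b = (p:ℂ)) (hr : a * b = (r:ℂ)) (n : ℕ) :
    (a + n) * (b + n) = (((n:ℝ)^2 + p*n + r : ℝ) : ℂ) := by
  push_cast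
  linear_combination hr + (n:ℂ) * hp

lemma uu_nonneg (a b : ℂ) (n : ℕ) : 0 ≤ uu a b n := norm_nonneg _

variable (hp : a + b = (p:ℂ)) (hr : a * b = (r:ℂ))
  (hq : ∀ n : ℕ, 0 ≤ (n:ℝ)^2 + p*n + r)
include hp hr hq

lemma prod_eq (n : ℕ) : poch a n * poch b n = ((uu a b n : ℝ) : ℂ) := by
  induction n with
  | zero => simp [poch_zero, uu]
  | succ n ih =>
      have h1 : poch a (n+1) * poch b (n+1)
          = (poch a n * poch b n) * ((a+n)*(b+n)) := by
        rw [poch_succ, poch_succ]; ring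
      have h2 : poch a (n+1) * poch b (n+1)
          = (((uu a b n * ((n:ℝ)^2+p*n+r)) : ℝ) : ℂ) := by
        rw [h1, ih, quad hp hr]; push_cast; ring
      rw [h2]
      have h3 : uu a b (n+1) = |uu a b n * ((n:ℝ)^2+p*n+r)| := by
        rw [uu, h2, Complex.norm_real, Real.norm_eq_abs]
      rw [h3, _root_.abs_of_nonneg (mul_nonneg (uu_nonneg a b n) (hq n))]

lemma uu_succ (n : ℕ) : uu a b (n+1) = uu a b n * ((n:ℝ)^2+p*n+r) := by
  have h1 : poch a (n+1) * poch b (n+1)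
      = (((uu a b n * ((n:ℝ)^2+p*n+r)) : ℝ) : ℂ) := by
    rw [poch_succ, poch_succ, show (poch a n * (a+n)) * (poch b n * (b+n))
      = (poch a n * poch b n) * ((a+n)*(b+n)) by ring, prod_eq hp hr hq, quad hp hr]
    push_cast; ring
  rw [uu, h1, Complex.norm_real, Real.norm_eq_abs,
    _root_.abs_of_nonneg (mul_nonneg (uu_nonneg a b n) (hq n))]

omit hp hr hq

lemma tt_nonneg {c : ℝ} (hc : 0 < c) (n : ℕ) : 0 ≤ tt a b c n := by
  have := pr_pos hc n
  have := uu_nonneg a b n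
  have : (0:ℝ) < n.factorial := by positivity
  unfold tt; positivity

lemma tt_zero (c : ℝ) : tt a b c 0 = 1 := by
  simp [tt, uu, poch_zero, pr_zero]

include hp hr hq

lemma tt_succ {c : ℝ} (hc : 0 < c) (n : ℕ) :
    tt a b c (n+1) * ((c + n) * (n+1)) = tt a b c n * ((n:ℝ)^2+p*n+r) := by
  have h1 : (0:ℝ) < pr c n := pr_pos hc n
  have h2 : (0:ℝ) < (n.factorial : ℝ) := by positivity
  have h3 : (0:ℝ) < c + n := by positivity
  rw [tt, tt, uu_succ hp hr hq, pr_succ, Nat.factorial_succ]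
  push_cast
  field_simp

omit hp hr hq

lemma tt_shift {c : ℝ} (hc : 0 < c) (n : ℕ) :
    tt a b (c+1) n * (c + n) = tt a b c n * c := by
  have h1 : (0:ℝ) < pr c n := pr_pos hc n
  have h1' : (0:ℝ) < pr (c+1) n := pr_pos (by linarith) n
  have h2 : (0:ℝ) < (n.factorial : ℝ) := by positivity
  have h3 : (0:ℝ) < c + n := by positivity
  have h4 := pr_shift c n
  rw [tt, tt]
  field_simp
  linear_combination (uu a b n) * h4

lemma tt_mono_c {c c' : ℝ} (hc : 0 < c) (hcc : c ≤ c') (n : ℕ) :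
    tt a b c' n ≤ tt a b c n := by
  have h1 : (0:ℝ) < pr c n := pr_pos hc n
  have h1' : (0:ℝ) < pr c' n := pr_pos (lt_of_lt_of_le hc hcc) n
  have h2 : (0:ℝ) < (n.factorial : ℝ) := by positivity
  rw [tt, tt]
  apply div_le_div_of_nonneg_left (uu_nonneg a b n) (by positivity)
  have := pr_mono hc hcc n
  nlinarith

lemma tt_head {c c' : ℝ} (hc : 0 < c) (hcc : c ≤ c') {n : ℕ} (hn : 1 ≤ n) :
    c' * tt a b c' n ≤ c * tt a b c n := by
  have h1 : (0:ℝ) < pr c n := pr_pos hc n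
  have h1' : (0:ℝ) < pr c' n := pr_pos (lt_of_lt_of_le hc hcc) n
  have h2 : (0:ℝ) < (n.factorial : ℝ) := by positivity
  have h4 := pr_ratio hc hcc n hn
  rw [tt, tt, mul_div_assoc', mul_div_assoc', div_le_div_iff₀ (by positivity) (by positivity)]
  have h5 := uu_nonneg a b n
  nlinarith [mul_le_mul_of_nonneg_left h4 (mul_nonneg h5 h2.le)]
end main

section summab
variable {a b : ℂ} {p r c : ℝ}
  (hp : a + b = (p:ℂ)) (hr : a * b = (r:ℂ))
  (hq : ∀ n : ℕ, 0 ≤ (n:ℝ)^2 + p*n + r)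
  (hc : 0 < c) (hcp : p + 1 < c)
include hp hr hq hc hcp

lemma ratio_le :
    ∃ N : ℕ, 1 ≤ N ∧ ∀ n : ℕ, N ≤ n →
      tt a b c (n+1) * (((n:ℝ)+2) ^ ((c-p+3)/2 : ℝ)) ≤
        tt a b c n * (((n:ℝ)+1) ^ ((c-p+3)/2 : ℝ)) := by
  set s : ℝ := (c-p+3)/2 with hs_def
  have hs1 : 1 ≤ s := by rw [hs_def]; linarith
  have hδ : 0 < c - p - 1 := by linarith
  set A : ℝ := (c+1)*(2-s)+c-2*p-r with hA_def
  set B : ℝ := c*(2-s)-2*r with hB_def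
  refine ⟨max 1 (Nat.ceil ((|A|+|B|) * 2 / (c-p-1))), le_max_left _ _, ?_⟩
  intro n hn
  have hn1 : (1:ℝ) ≤ (n:ℝ) := by
    have : (1:ℕ) ≤ n := le_trans (le_max_left _ _) hn
    exact_mod_cast this
  have hNn : (|A|+|B|) * 2 / (c-p-1) ≤ (n:ℝ) := by
    calc (|A|+|B|) * 2 / (c-p-1) ≤ (Nat.ceil ((|A|+|B|) * 2 / (c-p-1)) : ℝ) := Nat.le_ceil _
      _ ≤ (n:ℝ) := by
          have : Nat.ceil ((|A|+|B|) * 2 / (c-p-1)) ≤ n := le_trans (le_max_right _ _) hn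
          exact_mod_cast this
  have hNn' : |A| + |B| ≤ (c-p-1)/2 * (n:ℝ) := by
    rw [div_le_iff₀ hδ] at hNn
    linarith
  -- polynomial inequality
  have hpoly : ((n:ℝ)^2+p*n+r) * ((n:ℝ)+2) ≤ (c+(n:ℝ))*((n:ℝ)+1)*(((n:ℝ)+2)-s) := by
    have habsA : A ≤ |A| := le_abs_self A
    have habsA' : -|A| ≤ A := neg_abs_le A
    have habsB : B ≤ |B| := le_abs_self B
    have habsB' : -|B| ≤ B := neg_abs_le B
    have key : 0 ≤ (c-p-1)/2 * (n:ℝ)^2 + A * (n:ℝ) + B := by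
      nlinarith [mul_le_mul_of_nonneg_right hNn' (by linarith : (0:ℝ) ≤ (n:ℝ))]
    nlinarith [key]
  have hn2 : (0:ℝ) < (n:ℝ) + 2 := by linarith
  have hn1' : (0:ℝ) < (n:ℝ) + 1 := by linarith
  have hDn : (0:ℝ) < (c+(n:ℝ))*((n:ℝ)+1) := by nlinarith
  -- Bernoulli
  have hbern : (1:ℝ) - s/((n:ℝ)+2) ≤ (((n:ℝ)+1)/((n:ℝ)+2)) ^ s := by
    have hz : (-1:ℝ) ≤ -(1/((n:ℝ)+2)) := by
      rw [neg_le_neg_iff]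
      rw [div_le_one hn2]; linarith
    have := one_add_mul_self_le_rpow_one_add hz hs1
    have he : (1:ℝ) + -(1/((n:ℝ)+2)) = ((n:ℝ)+1)/((n:ℝ)+2) := by field_simp; ring
    rw [he] at this
    calc (1:ℝ) - s/((n:ℝ)+2) = 1 + s * -(1/((n:ℝ)+2)) := by ring
      _ ≤ _ := this
  -- combine
  have hP : (0:ℝ) ≤ (n:ℝ)^2+p*n+r := hq n
  have hstep : ((n:ℝ)^2+p*n+r) ≤ (c+(n:ℝ))*((n:ℝ)+1) * ((1:ℝ) - s/((n:ℝ)+2)) := by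
    rw [show (c+(n:ℝ))*((n:ℝ)+1) * ((1:ℝ) - s/((n:ℝ)+2))
      = (c+(n:ℝ))*((n:ℝ)+1)*(((n:ℝ)+2)-s) / ((n:ℝ)+2) by field_simp]
    rw [le_div_iff₀ hn2]
    exact hpoly
  have hkey : ((n:ℝ)^2+p*n+r) * (((n:ℝ)+2) ^ s) ≤
      (c+(n:ℝ))*((n:ℝ)+1) * (((n:ℝ)+1) ^ s) := by
    have h6 : (0:ℝ) ≤ ((n:ℝ)+2) ^ s := Real.rpow_nonneg hn2.le s
    calc ((n:ℝ)^2+p*n+r) * (((n:ℝ)+2) ^ s)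
        ≤ ((c+(n:ℝ))*((n:ℝ)+1) * ((1:ℝ) - s/((n:ℝ)+2))) * (((n:ℝ)+2) ^ s) :=
          mul_le_mul_of_nonneg_right hstep h6
      _ ≤ ((c+(n:ℝ))*((n:ℝ)+1) * ((((n:ℝ)+1)/((n:ℝ)+2)) ^ s)) * (((n:ℝ)+2) ^ s) := by
          apply mul_le_mul_of_nonneg_right _ h6
          exact mul_le_mul_of_nonneg_left hbern hDn.le
      _ = (c+(n:ℝ))*((n:ℝ)+1) * (((n:ℝ)+1) ^ s) := by
          rw [Real.div_rpow hn1'.le hn2.le]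
          rw [mul_assoc, div_mul_cancel₀]
          exact (Real.rpow_pos_of_pos hn2 s).ne'
  -- conclude
  have hrec := tt_succ hp hr hq hc n
  have htt : 0 ≤ tt a b c n := tt_nonneg hc n
  have h7 : tt a b c (n+1) = tt a b c n * (((n:ℝ)^2+p*n+r) / ((c+(n:ℝ))*((n:ℝ)+1))) := by
    field_simp
    linear_combination hrec
  rw [h7]
  rw [show tt a b c n * (((n:ℝ)^2+p*n+r) / ((c+(n:ℝ))*((n:ℝ)+1))) * (((n:ℝ)+2) ^ s)
    = tt a b c n * ((((n:ℝ)^2+p*n+r) * (((n:ℝ)+2) ^ s)) / ((c+(n:ℝ))*((n:ℝ)+1))) by ring]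
  rw [show tt a b c n * (((n:ℝ)+1) ^ s)
    = tt a b c n * (((c+(n:ℝ))*((n:ℝ)+1) * (((n:ℝ)+1) ^ s)) / ((c+(n:ℝ))*((n:ℝ)+1))) by
      rw [mul_div_cancel_left₀]; exact hDn.ne']
  apply mul_le_mul_of_nonneg_left _ htt
  exact (div_le_div_iff_of_pos_right hDn).mpr hkey

lemma summable_main :
    Summable (fun n : ℕ => ((n:ℝ)+1) * tt a b c n) := by
  obtain ⟨N, hN1, hrat⟩ := ratio_le hp hr hq hc hcp
  set s : ℝ := (c-p+3)/2 with hs_def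
  have hs2 : 2 < s := by rw [hs_def]; linarith
  have hmono : ∀ n : ℕ, N ≤ n →
      tt a b c n * (((n:ℝ)+1) ^ s) ≤ tt a b c N * (((N:ℝ)+1) ^ s) := by
    intro n hn
    induction n, hn using Nat.le_induction with
    | base => exact le_refl _
    | succ n hn ih =>
        have h1 : (((n+1:ℕ):ℝ)+1) = ((n:ℝ)+2) := by push_cast; ring
        calc tt a b c (n+1) * ((((n+1:ℕ):ℝ)+1) ^ s)
            = tt a b c (n+1) * (((n:ℝ)+2) ^ s) := by rw [h1]
          _ ≤ tt a b c n * (((n:ℝ)+1) ^ s) := hrat n hn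
          _ ≤ _ := ih
  set C : ℝ := tt a b c N * (((N:ℝ)+1) ^ s) with hC_def
  have hbound : ∀ n : ℕ, N ≤ n → ((n:ℝ)+1) * tt a b c n ≤ C * (((n:ℝ)+1) ^ (1-s)) := by
    intro n hn
    have h1 : (0:ℝ) < ((n:ℝ)+1) := by positivity
    have h2 := hmono n hn
    have h3 : ((n:ℝ)+1) * tt a b c n
        = (tt a b c n * (((n:ℝ)+1) ^ s)) * (((n:ℝ)+1) ^ (1-s)) := by
      rw [mul_assoc, ← Real.rpow_add h1, show s + (1-s) = 1 by ring, Real.rpow_one]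
      ring
    rw [h3]
    exact mul_le_mul_of_nonneg_right h2 (Real.rpow_nonneg h1.le _)
  have hsum0 : Summable (fun m : ℕ => ((m:ℝ)) ^ (1-s)) :=
    Real.summable_nat_rpow.2 (by linarith)
  have hsum1 : Summable (fun m : ℕ => (((m:ℝ)+1)) ^ (1-s)) := by
    have h := (summable_nat_add_iff 1).2 hsum0
    apply h.congr
    intro m; push_cast; ring_nf
  rw [← summable_nat_add_iff N]
  have hsum2 : Summable (fun n : ℕ => C * ((((n+N:ℕ)):ℝ)+1) ^ (1-s)) := by
    apply Summable.mul_left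
    exact (summable_nat_add_iff N).2 hsum1
  apply Summable.of_nonneg_of_le _ _ hsum2
  · intro n
    exact mul_nonneg (by positivity) (tt_nonneg hc _)
  · intro n
    exact hbound (n+N) (Nat.le_add_left N n)

lemma summable_one_tt {c' : ℝ} (hcc : c ≤ c') :
    Summable (fun n : ℕ => ((n:ℝ)+1) * tt a b c' n) := by
  apply Summable.of_nonneg_of_le _ _ (summable_main hp hr hq hc hcp)
  · intro n; exact mul_nonneg (by positivity) (tt_nonneg (lt_of_lt_of_le hc hcc) _)
  · intro n
    exact mul_le_mul_of_nonneg_left (tt_mono_c hc hcc n) (by positivity)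

lemma summable_tt {c' : ℝ} (hcc : c ≤ c') : Summable (tt a b c') := by
  apply Summable.of_nonneg_of_le (fun n => tt_nonneg (lt_of_lt_of_le hc hcc) n) _
    (summable_one_tt hp hr hq hc hcp hcc)
  intro n
  have h1 := tt_nonneg (a := a) (b := b) (lt_of_lt_of_le hc hcc) n
  nlinarith [Nat.cast_nonneg (α := ℝ) n]

lemma summable_n_tt {c' : ℝ} (hcc : c ≤ c') :
    Summable (fun n : ℕ => (n:ℝ) * tt a b c' n) := by
  apply Summable.of_nonneg_of_le _ _ (summable_one_tt hp hr hq hc hcp hcc)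
  · intro n; exact mul_nonneg (Nat.cast_nonneg _) (tt_nonneg (lt_of_lt_of_le hc hcc) _)
  · intro n
    have h1 := tt_nonneg (a := a) (b := b) (lt_of_lt_of_le hc hcc) n
    nlinarith [Nat.cast_nonneg (α := ℝ) n]
end summab

section contig
variable {a b : ℂ} {p r c : ℝ}
  (hp : a + b = (p:ℂ)) (hr : a * b = (r:ℂ))
  (hq : ∀ n : ℕ, 0 ≤ (n:ℝ)^2 + p*n + r)
  (hc : 0 < c) (hcp : p + 1 < c)
include hp hr hq hc hcp

lemma star_id {c' : ℝ} (hcc : c ≤ c') (n : ℕ) :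
    c' * (c'-p) * tt a b c' n =
      (c'^2 - p*c' + r) * tt a b (c'+1) n
      + c' * ((n:ℝ) * tt a b c' n - ((n:ℝ)+1) * tt a b c' (n+1)) := by
  have hc' : 0 < c' := lt_of_lt_of_le hc hcc
  have hne : (c'+(n:ℝ)) ≠ 0 := by positivity
  have h := tt_succ hp hr hq hc' n
  have h2 := tt_shift (a := a) (b := b) hc' n
  apply mul_right_cancel₀ hne
  linear_combination (-(c'^2 - p*c' + r)) * h2 + c' * h

lemma contig_rel {c' : ℝ} (hcc : c ≤ c') :
    c' * (c'-p) * (∑' n, tt a b c' n) =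
      (c'^2 - p*c' + r) * (∑' n, tt a b (c'+1) n) := by
  have hc' : 0 < c' := lt_of_lt_of_le hc hcc
  set f : ℕ → ℝ := fun n => (n:ℝ) * tt a b c' n with hf_def
  have hf : Summable f := summable_n_tt hp hr hq hc hcp hcc
  have hf1 : Summable (fun n => f (n+1)) := by
    rw [summable_nat_add_iff]; exact hf
  have htel : ∑' n, (f n - f (n+1)) = 0 := by
    rw [Summable.tsum_sub hf hf1]
    have := Summable.tsum_eq_zero_add hf
    have hf0 : f 0 = 0 := by simp [hf_def]
    rw [this, hf0]
    ring
  have hs1 : Summable (tt a b c') := summable_tt hp hr hq hc hcp hcc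
  have hs2 : Summable (tt a b (c'+1)) := summable_tt hp hr hq hc hcp (by linarith)
  calc c' * (c'-p) * (∑' n, tt a b c' n)
      = ∑' n, c' * (c'-p) * tt a b c' n := (tsum_mul_left).symm
    _ = ∑' n, ((c'^2 - p*c' + r) * tt a b (c'+1) n + c' * (f n - f (n+1))) := by
        apply tsum_congr
        intro n
        have hst := star_id hp hr hq hc hcp hcc n
        simp only [hf_def]
        push_cast
        linear_combination hst
    _ = (∑' n, (c'^2 - p*c' + r) * tt a b (c'+1) n) + ∑' n, c' * (f n - f (n+1)) := by
        apply Summable.tsum_add (hs2.mul_left _) ((hf.sub hf1).mul_left _)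
    _ = (c'^2 - p*c' + r) * (∑' n, tt a b (c'+1) n) + c' * ∑' n, (f n - f (n+1)) := by
        rw [tsum_mul_left, tsum_mul_left]
    _ = (c'^2 - p*c' + r) * (∑' n, tt a b (c'+1) n) := by rw [htel]; ring

lemma ladder (m : ℕ) :
    (∑' n, tt a b c n) =
      (∏ k ∈ Finset.range m, ((c+k)^2 - p*(c+k) + r)/((c+k)*((c+k)-p)))
        * (∑' n, tt a b (c+m) n) := by
  induction m with
  | zero => simp
  | succ m ih =>
      have hcm : 0 < c + m := by positivity
      have hcmp : (0:ℝ) < (c+m) - p := by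
        have : (0:ℝ) ≤ (m:ℝ) := Nat.cast_nonneg m
        linarith
      have hrel := contig_rel hp hr hq hc hcp (c' := c + m) (by linarith [Nat.cast_nonneg (α := ℝ) m])
      have hstep : (∑' n, tt a b (c+m) n) =
          ((c+(m:ℝ))^2 - p*(c+m) + r)/((c+m)*((c+m)-p)) * (∑' n, tt a b (c+m+1) n) := by
        rw [div_mul_eq_mul_div, eq_div_iff (by positivity)]
        linear_combination hrel
      rw [ih, hstep, Finset.prod_range_succ]
      have hcast : c + ((m+1 : ℕ) : ℝ) = c + (m:ℝ) + 1 := by push_cast; ring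
      rw [hcast]
      ring
end contig

section limits
variable {a b : ℂ} {p r c : ℝ}
  (hp : a + b = (p:ℂ)) (hr : a * b = (r:ℂ))
  (hq : ∀ n : ℕ, 0 ≤ (n:ℝ)^2 + p*n + r)
  (hc : 0 < c) (hcp : p + 1 < c) (hr0 : 0 < r)
include hp hr hq hc hcp

lemma Ft_tendsto_one :
    Filter.Tendsto (fun m : ℕ => ∑' n, tt a b (c+m) n) Filter.atTop (𝓝 1) := by
  set M : ℝ := ∑' n : ℕ, tt a b c (n+1) with hM_def
  have hsc : Summable (tt a b c) := summable_tt hp hr hq hc hcp le_rfl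
  have hsc1 : Summable (fun n : ℕ => tt a b c (n+1)) := by
    rw [summable_nat_add_iff]; exact hsc
  have hM0 : 0 ≤ M := tsum_nonneg (fun n => tt_nonneg hc _)
  have hdecomp : ∀ m : ℕ, (∑' n, tt a b (c+m) n)
      = 1 + ∑' n : ℕ, tt a b (c+m) (n+1) := by
    intro m
    have hcm : (0:ℝ) < c + m := by positivity
    have hs : Summable (tt a b (c+m)) :=
      summable_tt hp hr hq hc hcp (by linarith [Nat.cast_nonneg (α := ℝ) m])
    rw [Summable.tsum_eq_zero_add hs, tt_zero]
  have hcm : ∀ m : ℕ, (0:ℝ) < c + m := fun m => by positivity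
  have hle : ∀ m : ℕ, (1:ℝ) ≤ ∑' n, tt a b (c+m) n := by
    intro m
    rw [hdecomp m]
    have : (0:ℝ) ≤ ∑' n : ℕ, tt a b (c+m) (n+1) :=
      tsum_nonneg (fun n => tt_nonneg (hcm m) _)
    linarith
  have hge : ∀ m : ℕ, (∑' n, tt a b (c+m) n) ≤ 1 + (c * M) / (c + m) := by
    intro m
    rw [hdecomp m]
    have hcc : c ≤ c + m := by linarith [Nat.cast_nonneg (α := ℝ) m]
    have hsm1 : Summable (fun n : ℕ => tt a b (c+m) (n+1)) := by
      rw [summable_nat_add_iff]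
      exact summable_tt hp hr hq hc hcp hcc
    have hterm : ∀ n : ℕ, tt a b (c+m) (n+1) ≤ (c / (c + m)) * tt a b c (n+1) := by
      intro n
      have hh := tt_head (a := a) (b := b) hc hcc (n := n+1) (Nat.le_add_left 1 n)
      rw [div_mul_eq_mul_div, le_div_iff₀ (hcm m)]
      nlinarith [hh]
    have h2 : (∑' n : ℕ, tt a b (c+m) (n+1)) ≤ ∑' n : ℕ, (c / (c + m)) * tt a b c (n+1) :=
      Summable.tsum_le_tsum hterm hsm1 (hsc1.mul_left _)
    rw [tsum_mul_left] at h2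
    rw [div_mul_eq_mul_div] at h2
    linarith
  have hupper : Filter.Tendsto (fun m : ℕ => 1 + (c * M) / (c + m)) Filter.atTop (𝓝 1) := by
    have h1 : Filter.Tendsto (fun m : ℕ => c + (m:ℝ)) Filter.atTop Filter.atTop :=
      Filter.tendsto_atTop_add_const_left _ _ tendsto_natCast_atTop_atTop
    have h2 : Filter.Tendsto (fun m : ℕ => (c * M) / (c + (m:ℝ))) Filter.atTop (𝓝 0) :=
      Filter.Tendsto.div_atTop tendsto_const_nhds h1
    have := h2.const_add (1:ℝ)
    simpa using this
  exact tendsto_of_tendsto_of_tendsto_of_le_of_le tendsto_const_nhds hupper hle hge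

include hr0 in
lemma n_tt_sum_le :
    ∑' n : ℕ, ((n:ℝ)+1) * tt a b c n ≤ ((c-p-1+r)/(c-p-1)) * (∑' n, tt a b c n) := by
  set δ : ℝ := c - p - 1 with hδ_def
  have hδ : 0 < δ := by rw [hδ_def]; linarith
  set dd : ℕ → ℝ := fun n => (n:ℝ)*(c+n-1)*tt a b c n with hdd_def
  have hdd0 : dd 0 = 0 := by simp [hdd_def]
  have hdd_succ : ∀ n : ℕ, dd (n+1) = tt a b c n * ((n:ℝ)^2+p*n+r) := by
    intro n
    have hts := tt_succ hp hr hq hc n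
    simp only [hdd_def]
    push_cast
    linear_combination hts
  have hdd_nonneg : ∀ n : ℕ, 0 ≤ dd n := by
    intro n
    cases n with
    | zero => rw [hdd0]
    | succ n => rw [hdd_succ n]; exact mul_nonneg (tt_nonneg hc n) (hq n)
  have hstar : ∀ n : ℕ, δ * ((n:ℝ) * tt a b c n) = r * tt a b c n - (dd (n+1) - dd n) := by
    intro n
    rw [hdd_succ n]
    simp only [hdd_def, hδ_def]
    ring
  have hsum : Summable (tt a b c) := summable_tt hp hr hq hc hcp le_rfl
  have hsumn : Summable (fun n : ℕ => (n:ℝ) * tt a b c n) :=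
    summable_n_tt hp hr hq hc hcp le_rfl
  have hpartial : ∀ N : ℕ, ∑ n ∈ Finset.range N, (n:ℝ) * tt a b c n
      ≤ (r/δ) * (∑' n, tt a b c n) := by
    intro N
    have h2 : δ * ∑ n ∈ Finset.range N, (n:ℝ) * tt a b c n
        = r * (∑ n ∈ Finset.range N, tt a b c n) - dd N := by
      have e1 : ∑ n ∈ Finset.range N, (r * tt a b c n - (dd (n+1) - dd n))
          = r * (∑ n ∈ Finset.range N, tt a b c n) - dd N := by
        rw [Finset.sum_sub_distrib, Finset.sum_range_sub dd N, hdd0, ← Finset.mul_sum]; ring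
      rw [Finset.mul_sum, ← e1]
      exact Finset.sum_congr rfl (fun n _ => hstar n)
    have h3 : ∑ n ∈ Finset.range N, tt a b c n ≤ ∑' n, tt a b c n :=
      Summable.sum_le_tsum _ (fun n _ => tt_nonneg hc n) hsum
    rw [div_mul_eq_mul_div, le_div_iff₀ hδ]
    have h4 := mul_le_mul_of_nonneg_left h3 hr0.le
    nlinarith [hdd_nonneg N, h2]
  have htsum_n : ∑' n : ℕ, (n:ℝ) * tt a b c n ≤ (r/δ) * (∑' n, tt a b c n) :=
    Summable.tsum_le_of_sum_range_le hsumn hpartial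
  have hsplit : ∑' n : ℕ, ((n:ℝ)+1) * tt a b c n
      = (∑' n : ℕ, (n:ℝ) * tt a b c n) + ∑' n, tt a b c n := by
    rw [← Summable.tsum_add hsumn hsum]
    exact tsum_congr (fun n => by ring)
  rw [hsplit]
  have hFt0 : 0 ≤ ∑' n, tt a b c n := tsum_nonneg (fun n => tt_nonneg hc n)
  have he : ((c-p-1+r)/(c-p-1)) * (∑' n, tt a b c n)
      = (r/δ) * (∑' n, tt a b c n) + (∑' n, tt a b c n) := by
    rw [hδ_def]
    have hδ' : c - p - 1 ≠ 0 := by linarith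
    field_simp
    ring
  rw [he]
  linarith
end limits

lemma poch_ne_zero {z : ℂ} (hz : 0 < z.re) (n : ℕ) : poch z n ≠ 0 := by
  induction n with
  | zero => rw [poch_zero]; exact one_ne_zero
  | succ n ih =>
      rw [poch_succ]
      apply mul_ne_zero ih
      intro h
      have h2 : (z + (n:ℂ)).re = 0 := by rw [h]; simp
      rw [Complex.add_re, Complex.natCast_re] at h2
      have h3 : (0:ℝ) ≤ (n:ℝ) := Nat.cast_nonneg n
      linarith

section gamma
variable {a b : ℂ} {p r c : ℝ}
  (hp : a + b = (p:ℂ)) (hr : a * b = (r:ℂ))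
  (hra : a.re < c) (hrb : b.re < c) (hc : 0 < c) (hcp : p + 1 < c)

include hp hr in
lemma Q_cast (m : ℕ) :
    ((∏ k ∈ Finset.range m, ((c+(k:ℝ))^2 - p*(c+k) + r)/((c+k)*((c+k)-p)) : ℝ) : ℂ)
      = poch ((c:ℂ)-a) m * poch ((c:ℂ)-b) m
        / (poch (c:ℂ) m * poch (((c-p) : ℝ):ℂ) m) := by
  rw [poch_eq_prod, poch_eq_prod, poch_eq_prod, poch_eq_prod]
  rw [← Finset.prod_mul_distrib, ← Finset.prod_mul_distrib, ← Finset.prod_div_distrib]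
  rw [Complex.ofReal_prod]
  apply Finset.prod_congr rfl
  intro k _
  rw [Complex.ofReal_div]
  congr 1
  · push_cast
    linear_combination ((c:ℂ)+(k:ℂ)) * hp - hr
  · push_cast
    ring

lemma GammaSeq_poch (z : ℂ) (m : ℕ) :
    Complex.GammaSeq z m = (m:ℂ) ^ z * (m.factorial : ℂ) / poch z (m+1) := by
  rw [Complex.GammaSeq, poch_eq_prod]

include hp hra hrb hc hcp in
lemma Qc_eq_gammaSeq {m : ℕ} (hm : 1 ≤ m) :
    poch ((c:ℂ)-a) (m+1) * poch ((c:ℂ)-b) (m+1)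
        / (poch (c:ℂ) (m+1) * poch (((c-p) : ℝ):ℂ) (m+1))
      = Complex.GammaSeq (c:ℂ) m * Complex.GammaSeq (((c-p):ℝ):ℂ) m
        / (Complex.GammaSeq ((c:ℂ)-a) m * Complex.GammaSeq ((c:ℂ)-b) m) := by
  have hm0 : (m:ℂ) ≠ 0 := Nat.cast_ne_zero.2 (by omega)
  have hfac : ((m.factorial : ℕ) : ℂ) ≠ 0 := Nat.cast_ne_zero.2 (Nat.factorial_ne_zero m)
  have hre1 : (0:ℝ) < ((c:ℂ)-a).re := by
    rw [Complex.sub_re, Complex.ofReal_re]; linarith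
  have hre2 : (0:ℝ) < ((c:ℂ)-b).re := by
    rw [Complex.sub_re, Complex.ofReal_re]; linarith
  have hre3 : (0:ℝ) < ((c:ℂ)).re := by rw [Complex.ofReal_re]; linarith
  have hcast : ((((c-p):ℝ)):ℂ) = (c:ℂ) - (p:ℂ) := by push_cast; ring
  rw [hcast]
  have hre4 : (0:ℝ) < ((c:ℂ) - (p:ℂ)).re := by
    rw [Complex.sub_re, Complex.ofReal_re, Complex.ofReal_re]; linarith
  have hP1 := poch_ne_zero hre1 (m+1)
  have hP2 := poch_ne_zero hre2 (m+1)
  have hP3 := poch_ne_zero hre3 (m+1)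
  have hP4 := poch_ne_zero hre4 (m+1)
  have hW1 : (m:ℂ) ^ ((c:ℂ)) ≠ 0 := by
    intro h; exact hm0 ((Complex.cpow_eq_zero_iff _ _).1 h).1
  have hW2 : (m:ℂ) ^ ((c:ℂ) - (p:ℂ)) ≠ 0 := by
    intro h; exact hm0 ((Complex.cpow_eq_zero_iff _ _).1 h).1
  have hW3 : (m:ℂ) ^ ((c:ℂ)-a) ≠ 0 := by
    intro h; exact hm0 ((Complex.cpow_eq_zero_iff _ _).1 h).1
  have hW4 : (m:ℂ) ^ ((c:ℂ)-b) ≠ 0 := by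
    intro h; exact hm0 ((Complex.cpow_eq_zero_iff _ _).1 h).1
  have hcpow : (m:ℂ) ^ ((c:ℂ)) * (m:ℂ) ^ ((c:ℂ) - (p:ℂ))
      = (m:ℂ) ^ ((c:ℂ)-a) * (m:ℂ) ^ ((c:ℂ)-b) := by
    rw [← Complex.cpow_add _ _ hm0, ← Complex.cpow_add _ _ hm0]
    congr 1
    linear_combination hp
  rw [GammaSeq_poch, GammaSeq_poch, GammaSeq_poch, GammaSeq_poch]
  field_simp
  linear_combination -hcpow
end gamma

section gauss
variable {a b : ℂ} {p r c : ℝ}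
  (hp : a + b = (p:ℂ)) (hr : a * b = (r:ℂ))
  (hq : ∀ n : ℕ, 0 ≤ (n:ℝ)^2 + p*n + r)
  (hra : a.re < c) (hrb : b.re < c) (hc : 0 < c) (hcp : p + 1 < c)
include hp hr hra hrb hc hcp

lemma Q_tendsto :
    Filter.Tendsto
      (fun m : ℕ => (∏ k ∈ Finset.range m, ((c+(k:ℝ))^2 - p*(c+k) + r)/((c+k)*((c+k)-p))))
      Filter.atTop
      (𝓝 ((Complex.Gamma (c:ℂ) * Complex.Gamma (((c-p):ℝ):ℂ)
        / (Complex.Gamma ((c:ℂ)-a) * Complex.Gamma ((c:ℂ)-b))).re)) := by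
  have hGa : Complex.Gamma ((c:ℂ)-a) ≠ 0 :=
    Complex.Gamma_ne_zero_of_re_pos (by rw [Complex.sub_re, Complex.ofReal_re]; linarith)
  have hGb : Complex.Gamma ((c:ℂ)-b) ≠ 0 :=
    Complex.Gamma_ne_zero_of_re_pos (by rw [Complex.sub_re, Complex.ofReal_re]; linarith)
  set L : ℂ := Complex.Gamma (c:ℂ) * Complex.Gamma (((c-p):ℝ):ℂ)
        / (Complex.Gamma ((c:ℂ)-a) * Complex.Gamma ((c:ℂ)-b)) with hL_def
  set Qc : ℕ → ℂ := fun m => poch ((c:ℂ)-a) m * poch ((c:ℂ)-b) m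
        / (poch (c:ℂ) m * poch (((c-p) : ℝ):ℂ) m) with hQc_def
  have hT : Filter.Tendsto (fun m : ℕ => Complex.GammaSeq (c:ℂ) m
        * Complex.GammaSeq (((c-p):ℝ):ℂ) m
        / (Complex.GammaSeq ((c:ℂ)-a) m * Complex.GammaSeq ((c:ℂ)-b) m))
      Filter.atTop (𝓝 L) := by
    exact Filter.Tendsto.div
      ((Complex.GammaSeq_tendsto_Gamma _).mul (Complex.GammaSeq_tendsto_Gamma _))
      ((Complex.GammaSeq_tendsto_Gamma _).mul (Complex.GammaSeq_tendsto_Gamma _))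
      (mul_ne_zero hGa hGb)
  have hQc1 : Filter.Tendsto (fun m : ℕ => Qc (m+1)) Filter.atTop (𝓝 L) := by
    apply hT.congr'
    filter_upwards [Filter.eventually_ge_atTop 1] with m hm
    exact (Qc_eq_gammaSeq hp hra hrb hc hcp hm).symm
  have hQc : Filter.Tendsto Qc Filter.atTop (𝓝 L) :=
    (Filter.tendsto_add_atTop_iff_nat 1).1 hQc1
  have hre : Filter.Tendsto (fun m => (Qc m).re) Filter.atTop (𝓝 L.re) :=
    (Complex.continuous_re.tendsto L).comp hQc
  apply hre.congr
  intro m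
  simp only [hQc_def]
  rw [← Q_cast hp hr m]
  exact Complex.ofReal_re _

include hq in
lemma gauss_eq :
    (∑' n, tt a b c n) = (Complex.Gamma (c:ℂ) * Complex.Gamma (((c-p):ℝ):ℂ)
        / (Complex.Gamma ((c:ℂ)-a) * Complex.Gamma ((c:ℂ)-b))).re := by
  set K : ℝ := (Complex.Gamma (c:ℂ) * Complex.Gamma (((c-p):ℝ):ℂ)
        / (Complex.Gamma ((c:ℂ)-a) * Complex.Gamma ((c:ℂ)-b))).re with hK_def
  have h1 : Filter.Tendsto
      (fun m : ℕ => (∏ k ∈ Finset.range m, ((c+(k:ℝ))^2 - p*(c+k) + r)/((c+k)*((c+k)-p)))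
        * (∑' n, tt a b (c+m) n)) Filter.atTop (𝓝 (K * 1)) :=
    (Q_tendsto hp hr hra hrb hc hcp).mul (Ft_tendsto_one hp hr hq hc hcp)
  have h2 : Filter.Tendsto (fun _ : ℕ => (∑' n, tt a b c n)) Filter.atTop
      (𝓝 (∑' n, tt a b c n)) := tendsto_const_nhds
  have h3 := h2.congr (fun m => ladder hp hr hq hc hcp m)
  have := tendsto_nhds_unique h3 h1
  rw [mul_one] at this
  exact this
end gauss


/-- Theorem 5(a): under the stated conditions on `a, b, c, α`, the
coefficients of `g₁(z) = (α/2) z F(a,b;c;z)` satisfy `∑_{n≥1} n|bₙ| ≤ 1/2`;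
consequently `f₁(z) = z + conj(g₁(z))` is uniformly starlike in `𝔻`. -/

theorem hypergeom_uniformly_starlike_a (a b : ℂ)
    (hab : (∃ a' b' : ℝ, a = (a' : ℂ) ∧ b = (b' : ℂ) ∧ -1 < a' ∧ -1 < b' ∧ 0 < a' * b') ∨
           (a ≠ 0 ∧ b ≠ 0 ∧ b = conj a))
    (c : ℝ) (hc : 0 < c) (hc1 : (a + b).re + 1 < c)
    (α : ℂ) (hα : ‖α‖ < 1)
    (hQ : ∃ q : ℝ, 0 < q ∧ q ≤ 1 ∧
      (q : ℂ) = (‖α‖ : ℂ) * (Complex.Gamma (c : ℂ) * Complex.Gamma ((c : ℂ) - a - b - 1)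
          / (Complex.Gamma ((c : ℂ) - a) * Complex.Gamma ((c : ℂ) - b)))
        * (a * b + (c : ℂ) - a - b - 1)) :
    (Summable fun n : ℕ => ((n + 1 : ℝ)) * ‖bc1 a b (c : ℂ) α n‖) ∧
    (∑' n : ℕ, ((n + 1 : ℝ)) * ‖bc1 a b (c : ℂ) α n‖) ≤ 1 / 2 ∧
    UniformlyStarlikeOnDisk (fun z => z) (fun z => α / 2 * z * hypF a b (c : ℂ) z) := by
  -- Extract the real parameters p, r
  obtain ⟨p, r, hp, hrr, hr0, hqn, hra, hrb⟩ :
      ∃ p r : ℝ, a + b = (p:ℂ) ∧ a*b = (r:ℂ) ∧ 0 < r ∧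
        (∀ n : ℕ, 0 ≤ (n:ℝ)^2 + p*n + r) ∧ a.re < c ∧ b.re < c := by
    rcases hab with ⟨a', b', ha', hb', ha1, hb1, hab'⟩ | ⟨ha, hb, hconj⟩
    · refine ⟨a' + b', a' * b', by rw [ha', hb']; push_cast; ring,
        by rw [ha', hb']; push_cast; ring, hab', ?_, ?_, ?_⟩
      · intro n
        rcases Nat.eq_zero_or_pos n with h | h
        · subst h; simpa using hab'.le
        · have hn1 : (1:ℝ) ≤ (n:ℝ) := by exact_mod_cast h
          have h1 : (0:ℝ) < (n:ℝ) + a' := by linarith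
          have h2 : (0:ℝ) < (n:ℝ) + b' := by linarith
          nlinarith [mul_pos h1 h2]
      · rw [ha'] at hc1 ⊢
        rw [hb'] at hc1
        simp only [Complex.add_re, Complex.ofReal_re] at hc1 ⊢
        linarith
      · rw [ha'] at hc1
        rw [hb'] at hc1 ⊢
        simp only [Complex.add_re, Complex.ofReal_re] at hc1 ⊢
        linarith
    · have hre2 : (a + b).re = 2 * a.re := by
        rw [hconj]; simp [Complex.add_re, Complex.conj_re]; ring
      rw [hre2] at hc1
      have hrac : a.re < c := by
        rcases le_or_gt a.re 0 with h | h
        · linarith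
        · linarith
      refine ⟨2 * a.re, Complex.normSq a, ?_, ?_, ?_, ?_, hrac, ?_⟩
      · rw [hconj, Complex.add_conj]
      · rw [hconj, Complex.mul_conj]
      · exact Complex.normSq_pos.2 ha
      · intro n
        rw [Complex.normSq_apply]
        nlinarith [sq_nonneg ((n:ℝ) + a.re), sq_nonneg a.im]
      · rw [hconj, Complex.conj_re]; exact hrac
  have hcp : p + 1 < c := by
    have : (a + b).re = p := by rw [hp, Complex.ofReal_re]
    linarith [hc1, this.symm.le]
  set δ : ℝ := c - p - 1 with hδ_def
  have hδ : 0 < δ := by rw [hδ_def]; linarith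
  obtain ⟨q, hq0, hq1, hqe⟩ := hQ
  -- α ≠ 0
  have hα0 : α ≠ 0 := by
    intro h
    rw [h] at hqe
    simp at hqe
    rw [hqe] at hq0
    exact lt_irrefl 0 hq0
  -- Gamma identities
  have hGa : Complex.Gamma ((c:ℂ)-a) ≠ 0 :=
    Complex.Gamma_ne_zero_of_re_pos (by rw [Complex.sub_re, Complex.ofReal_re]; linarith)
  have hGb : Complex.Gamma ((c:ℂ)-b) ≠ 0 :=
    Complex.Gamma_ne_zero_of_re_pos (by rw [Complex.sub_re, Complex.ofReal_re]; linarith)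
  have hδne : ((δ:ℝ):ℂ) ≠ 0 := by
    simpa using hδ.ne'
  have hcab : (c:ℂ) - a - b - 1 = ((δ:ℝ):ℂ) := by
    rw [hδ_def]; push_cast; linear_combination -hp
  have habc : a * b + (c:ℂ) - a - b - 1 = (((r + δ):ℝ):ℂ) := by
    rw [hδ_def]; push_cast; linear_combination hrr - hp
  have hGam : Complex.Gamma (((c-p):ℝ):ℂ) = ((δ:ℝ):ℂ) * Complex.Gamma ((δ:ℝ):ℂ) := by
    rw [show (((c-p):ℝ):ℂ) = ((δ:ℝ):ℂ) + 1 by rw [hδ_def]; push_cast; ring]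
    exact Complex.Gamma_add_one _ hδne
  set K : ℝ := (Complex.Gamma (c:ℂ) * Complex.Gamma (((c-p):ℝ):ℂ)
        / (Complex.Gamma ((c:ℂ)-a) * Complex.Gamma ((c:ℂ)-b))).re with hK_def
  have hqre : q = (‖α‖ * (r+δ)/δ) * K := by
    have h5 : (q:ℂ) = ((((‖α‖ * (r+δ)/δ)):ℝ):ℂ)
        * (Complex.Gamma (c:ℂ) * Complex.Gamma (((c-p):ℝ):ℂ)
          / (Complex.Gamma ((c:ℂ)-a) * Complex.Gamma ((c:ℂ)-b))) := by
      rw [hqe]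
      rw [show (‖α‖:ℂ) * (Complex.Gamma (c:ℂ) * Complex.Gamma ((c:ℂ) - a - b - 1)
          / (Complex.Gamma ((c:ℂ) - a) * Complex.Gamma ((c:ℂ) - b)))
          * (a * b + (c:ℂ) - a - b - 1)
        = (‖α‖:ℂ) * (Complex.Gamma (c:ℂ) * Complex.Gamma ((c:ℂ) - a - b - 1)
          / (Complex.Gamma ((c:ℂ) - a) * Complex.Gamma ((c:ℂ) - b)))
          * ((a * b + (c:ℂ) - a - b - 1)) from rfl]
      rw [hcab, habc, hGam]
      push_cast
      field_simp
    have h6 := congrArg Complex.re h5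
    rw [Complex.ofReal_re, Complex.re_ofReal_mul] at h6
    rw [h6, hK_def]
  -- coefficient identity
  have hnorm_bc1 : ∀ n : ℕ, ‖bc1 a b (c:ℂ) α n‖ = (‖α‖/2) * tt a b c n := by
    intro n
    have hprn : (0:ℝ) < pr c n := pr_pos hc n
    have hfn : (0:ℝ) < (n.factorial : ℝ) := by positivity
    rw [bc1, prod_eq hp hrr hqn n, poch_ofReal]
    rw [show ((pr c n : ℝ):ℂ) * ((n.factorial : ℕ):ℂ) = (((pr c n * n.factorial):ℝ):ℂ) by
      push_cast; ring]
    rw [norm_div, norm_mul, Complex.norm_real, Complex.norm_real]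
    rw [Real.norm_eq_abs, Real.norm_eq_abs, _root_.abs_of_nonneg (uu_nonneg a b n),
      _root_.abs_of_nonneg (by positivity)]
    rw [norm_div, Complex.norm_ofNat]
    rw [tt]
    field_simp
  -- goal 1
  have hsum1 : Summable (fun n : ℕ => ((n:ℝ)+1) * ‖bc1 a b (c:ℂ) α n‖) := by
    have := (summable_main hp hrr hqn hc hcp).mul_left (‖α‖/2)
    apply this.congr
    intro n
    rw [hnorm_bc1 n]
    ring
  -- goal 2
  have hsum_eq : (∑' n : ℕ, ((n:ℝ)+1) * ‖bc1 a b (c:ℂ) α n‖)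
      = (‖α‖/2) * ∑' n : ℕ, ((n:ℝ)+1) * tt a b c n := by
    rw [← tsum_mul_left]
    apply tsum_congr
    intro n
    rw [hnorm_bc1 n]
    ring
  have hK_pos : (∑' n, tt a b c n) = K := gauss_eq hp hrr hqn hra hrb hc hcp
  have hle2 : (∑' n : ℕ, ((n:ℝ)+1) * tt a b c n) ≤ ((c-p-1+r)/(c-p-1)) * K := by
    have := n_tt_sum_le hp hrr hqn hc hcp hr0
    rw [hK_pos] at this
    exact this
  have hbound : (∑' n : ℕ, ((n:ℝ)+1) * ‖bc1 a b (c:ℂ) α n‖) ≤ 1/2 := by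
    rw [hsum_eq]
    have h7 : (‖α‖/2) * (∑' n : ℕ, ((n:ℝ)+1) * tt a b c n)
        ≤ (‖α‖/2) * (((c-p-1+r)/(c-p-1)) * K) :=
      mul_le_mul_of_nonneg_left hle2 (by positivity)
    have h8 : (‖α‖/2) * (((c-p-1+r)/(c-p-1)) * K) = q/2 := by
      rw [hqre, hδ_def]
      ring
    linarith
  refine ⟨by
      apply hsum1.congr
      intro n
      norm_num, by
      calc (∑' n : ℕ, ((n + 1 : ℝ)) * ‖bc1 a b (c : ℂ) α n‖)
          = (∑' n : ℕ, ((n:ℝ)+1) * ‖bc1 a b (c:ℂ) α n‖) := by norm_num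
        _ ≤ 1/2 := hbound, ?_⟩
  -- goal 3
  apply starlike_of_coeff (bc1 a b (c:ℂ) α) hsum1 hbound
  intro z
  rw [hypF]
  calc α / 2 * z * (∑' n : ℕ, poch a n * poch b n
        / (poch (c:ℂ) n * (n.factorial : ℂ)) * z ^ n)
      = (α / 2 * z) * (∑' n : ℕ, poch a n * poch b n
        / (poch (c:ℂ) n * (n.factorial : ℂ)) * z ^ n) := by ring
    _ = ∑' n : ℕ, (α / 2 * z) * (poch a n * poch b n
        / (poch (c:ℂ) n * (n.factorial : ℂ)) * z ^ n) := by rw [tsum_mul_left]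
    _ = ∑' n : ℕ, bc1 a b (c:ℂ) α n * z ^ (n+1) := by
        apply tsum_congr
        intro n
        rw [bc1]
        ring
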